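/- Let G be a simple undirected graph on vertices v_1, …, v_n with real adjacency matrix A_G, and for λ > 0 set R_λ = (1/λ)·I_n + A_G². Then A_G is nonsingular (invertible) if and only if for all i, j, lim_{λ→+∞} ⟨R_λ⁻¹ f_j, f_i⟩ = δ_{ij}, where f_i is the i-th column of A_G and δ_{ij} is the Kronecker delta; equivalently, if and only if R_λ⁻¹ A_G² converges entrywise to I_n as λ → +∞. -/

import Mathlib

open Filter Matrix

/-- `A_G` is nonsingular if and only if `lim_{λ→+∞} ⟨R_λ⁻¹ f_j, f_i⟩ = δ_{ij}` for all `i, j`,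
where `f_i` is the `i`-th column of `A_G` and `R_λ = (1/λ)·I_n + A_G²`. -/
theorem isUnit_adjMatrix_iff_tendsto
    (n : ℕ) (G : SimpleGraph (Fin n)) [DecidableRel G.Adj] :
    let A : Matrix (Fin n) (Fin n) ℝ := G.adjMatrix ℝ
    IsUnit A ↔
      ∀ i j : Fin n,
        Tendsto (fun lam : ℝ =>
            ∑ k : Fin n,
              ((((1 / lam) • (1 : Matrix (Fin n) (Fin n) ℝ) + A ^ 2)⁻¹).mulVec
                  (fun k => A k j)) k * A k i)
          atTop (nhds (if i = j then (1 : ℝ) else 0)) := by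
  intro A
  have hsymm : Aᵀ = A := G.transpose_adjMatrix
  -- rewrite the sum as a matrix entry
  have key : ∀ (R : Matrix (Fin n) (Fin n) ℝ) (i j : Fin n),
      ∑ k : Fin n, (R.mulVec (fun k => A k j)) k * A k i = (Aᵀ * R * A) i j := by
    intro R i j
    simp only [mulVec, dotProduct, mul_apply, transpose_apply, Finset.sum_mul,
      Finset.mul_sum]
    rw [Finset.sum_comm]
    congr 1; ext k; congr 1; ext m; ring
  have hF : ∀ (lam : ℝ) (i j : Fin n),
      (∑ k : Fin n, ((((1 / lam) • (1 : Matrix (Fin n) (Fin n) ℝ) + A ^ 2)⁻¹).mulVec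
          (fun k => A k j)) k * A k i)
        = (Aᵀ * ((1 / lam) • (1 : Matrix (Fin n) (Fin n) ℝ) + A ^ 2)⁻¹ * A) i j :=
    fun lam i j => key _ i j
  constructor
  · intro hA i j
    refine Tendsto.congr (fun lam => (hF lam i j).symm) ?_
    -- R_lam tends to A^2
    have h1 : Tendsto (fun lam : ℝ => (1 / lam) • (1 : Matrix (Fin n) (Fin n) ℝ) + A ^ 2)
        atTop (nhds (A ^ 2)) := by
      have : Tendsto (fun lam : ℝ => (1 / lam)) atTop (nhds 0) := by
        simpa [one_div] using tendsto_inv_atTop_zero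
      have := (this.smul_const (1 : Matrix (Fin n) (Fin n) ℝ)).add_const (A ^ 2)
      simpa using this
    have hdet : (A ^ 2).det ≠ 0 := by
      have : IsUnit (A ^ 2) := hA.pow 2
      exact ((isUnit_iff_isUnit_det _).mp this).ne_zero
    have hinv : ContinuousAt Inv.inv (A ^ 2) := by
      apply continuousAt_matrix_inv
      rw [show (Ring.inverse : ℝ → ℝ) = Inv.inv from funext fun x => Ring.inverse_eq_inv x]
      exact continuousAt_inv₀ hdet
    have h2 : Tendsto (fun lam : ℝ =>
        ((1 / lam) • (1 : Matrix (Fin n) (Fin n) ℝ) + A ^ 2)⁻¹) atTop (nhds ((A ^ 2)⁻¹)) :=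
      hinv.tendsto.comp h1
    have h3 : Tendsto (fun lam : ℝ =>
        (Aᵀ * ((1 / lam) • (1 : Matrix (Fin n) (Fin n) ℝ) + A ^ 2)⁻¹ * A) i j)
        atTop (nhds ((Aᵀ * (A ^ 2)⁻¹ * A) i j)) := by
      have hc : Continuous fun R : Matrix (Fin n) (Fin n) ℝ => (Aᵀ * R * A) i j :=
        ((continuous_const.matrix_mul continuous_id).matrix_mul continuous_const).matrix_elem i j
      exact (hc.tendsto _).comp h2
    have hlim : Aᵀ * (A ^ 2)⁻¹ * A = 1 := by
      rw [hsymm, pow_two, Matrix.mul_inv_rev, ← Matrix.mul_assoc,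
        Matrix.mul_nonsing_inv _ ((isUnit_iff_isUnit_det _).mp hA),
        Matrix.one_mul, Matrix.nonsing_inv_mul _ ((isUnit_iff_isUnit_det _).mp hA)]
    rw [hlim] at h3
    simpa [Matrix.one_apply] using h3
  · intro h
    have hmat : Tendsto (fun lam : ℝ =>
        Aᵀ * ((1 / lam) • (1 : Matrix (Fin n) (Fin n) ℝ) + A ^ 2)⁻¹ * A) atTop
        (nhds (1 : Matrix (Fin n) (Fin n) ℝ)) := by
      apply tendsto_pi_nhds.mpr
      intro i
      rw [tendsto_pi_nhds]
      intro j
      have := (h i j).congr (fun lam => hF lam i j)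
      simpa [Matrix.one_apply] using this
    have hdet : Tendsto (fun lam : ℝ =>
        (Aᵀ * ((1 / lam) • (1 : Matrix (Fin n) (Fin n) ℝ) + A ^ 2)⁻¹ * A).det) atTop
        (nhds (1 : ℝ)) := by
      have hc : Continuous fun M : Matrix (Fin n) (Fin n) ℝ => M.det :=
        continuous_id.matrix_det
      have h4 := (hc.tendsto _).comp hmat
      rw [det_one] at h4
      exact h4
    have : ∀ᶠ lam : ℝ in atTop,
        (Aᵀ * ((1 / lam) • (1 : Matrix (Fin n) (Fin n) ℝ) + A ^ 2)⁻¹ * A).det ≠ 0 := by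
      filter_upwards [hdet (isOpen_compl_singleton.mem_nhds (by norm_num : (1:ℝ) ≠ 0))] with
        lam hl using hl
    obtain ⟨lam, hlam⟩ := this.exists
    rw [Matrix.det_mul, Matrix.det_mul, det_transpose] at hlam
    have hAdet : A.det ≠ 0 := fun h0 => hlam (by rw [h0]; ring)
    exact (isUnit_iff_isUnit_det _).mpr (isUnit_iff_ne_zero.mpr hAdet)
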